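/- Let C be a finitary extensive category with finite products, let D = (D, ε, δ) be a comonad on C, and let c_Y : D Y ⟶ Y ⨿ Y be a family of morphisms natural in Y (a binary cooperation of D). If c satisfies the coassociativity coequation, i.e. for every Y, ass ∘ (c_Y ⨿ ε_Y) ∘ c_{D Y} ∘ δ_Y = (ε_Y ⨿ c_Y) ∘ c_{D Y} ∘ δ_Y (where ass : (Y ⨿ Y) ⨿ Y ≅ Y ⨿ (Y ⨿ Y) is the coproduct associator), then c also satisfies left and right corectangularity: for every Y, (c_Y ⨿ ε_Y) ∘ c_{D Y} ∘ δ_Y = (inl ⨿ id_Y) ∘ c_Y as morphisms D Y ⟶ (Y ⨿ Y) ⨿ Y, and (ε_Y ⨿ c_Y) ∘ c_{D Y} ∘ δ_Y = (id_Y ⨿ inr) ∘ c_Y as morphisms D Y ⟶ Y ⨿ (Y ⨿ Y). -/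

import Mathlib

open CategoryTheory CategoryTheory.Limits

universe v u

section Aux

variable {C : Type u} [Category.{v} C] [FinitaryExtensive C]

/-- In a finitary extensive category, the pullbacks of `f : X ⟶ Y ⨿ Z` along the two
coprojections form a colimit binary cofan over `X`. -/
lemma aux_pullbackCofanIsColimit {X Y Z : C} (f : X ⟶ Y ⨿ Z) :
    Nonempty (IsColimit (BinaryCofan.mk (pullback.fst f coprod.inl)
      (pullback.fst f coprod.inr))) := by
  have H := FinitaryExtensive.vanKampen _ (coprodIsCoprod Y Z)
  rw [BinaryCofan.isVanKampen_iff] at H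
  exact (H (BinaryCofan.mk (pullback.fst f coprod.inl) (pullback.fst f coprod.inr))
    (pullback.snd f coprod.inl) (pullback.snd f coprod.inr) f
    (pullback.condition (f := f) (g := coprod.inl)).symm
    (pullback.condition (f := f) (g := coprod.inr)).symm).mpr
    ⟨IsPullback.of_hasPullback f coprod.inl, IsPullback.of_hasPullback f coprod.inr⟩

/-- Two maps out of `X` agree iff they agree after restriction along the two
pullback inclusions determined by a map `f : X ⟶ Y ⨿ Z`. -/
lemma aux_ext {X Y Z T : C} (f : X ⟶ Y ⨿ Z) {g g' : X ⟶ T}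
    (h1 : pullback.fst f coprod.inl ≫ g = pullback.fst f coprod.inl ≫ g')
    (h2 : pullback.fst f coprod.inr ≫ g = pullback.fst f coprod.inr ≫ g') : g = g' := by
  obtain ⟨hc⟩ := aux_pullbackCofanIsColimit f
  exact BinaryCofan.IsColimit.hom_ext hc h1 h2

lemma aux_inl_associator (Y : C) :
    (coprod.inl : Y ⨿ Y ⟶ (Y ⨿ Y) ⨿ Y) ≫ (coprod.associator Y Y Y).hom =
      coprod.map (𝟙 Y) coprod.inl := by
  simp only [coprod.associator_hom, coprod.inl_desc]; ext <;> simp [coprod.inl_desc, coprod.inr_desc]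

lemma aux_inr_associator (Y : C) :
    (coprod.inr : Y ⟶ (Y ⨿ Y) ⨿ Y) ≫ (coprod.associator Y Y Y).hom =
      coprod.inr ≫ coprod.inr := by
  simp only [coprod.associator_hom, coprod.inr_desc]

/-- `coprod.map (𝟙 Y) coprod.inl` is a split mono, hence cancellable. -/
lemma aux_cancel {W Y : C} (x : W ⟶ Y ⨿ Y) (y : W ⟶ Y)
    (h : x ≫ coprod.map (𝟙 Y) (coprod.inl : Y ⟶ Y ⨿ Y) = y ≫ coprod.inl) :
    x = y ≫ coprod.inl := by
  have := congrArg (· ≫ coprod.map (𝟙 Y) (coprod.desc (𝟙 Y) (𝟙 Y))) h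
  simpa [coprod.inl_desc] using this

end Aux

/-- For a comonad `D` on a finitary extensive category with finite products with a binary
cooperation `c`, coassociativity of `c` implies left and right corectangularity. -/
theorem stmt_3 {C : Type u} [Category.{v} C] [FinitaryExtensive C] [HasFiniteProducts C]
    (D : Comonad C)
    (c : ∀ Y : C, D.obj Y ⟶ Y ⨿ Y)
    (c_nat : ∀ {Y Y' : C} (f : Y ⟶ Y'), D.map f ≫ c Y' = c Y ≫ coprod.map f f)
    (c_coassoc : ∀ Y : C,
      D.δ.app Y ≫ c (D.obj Y) ≫ coprod.map (c Y) (D.ε.app Y) ≫ (coprod.associator Y Y Y).hom =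
        D.δ.app Y ≫ c (D.obj Y) ≫ coprod.map (D.ε.app Y) (c Y)) :
    ∀ Y : C,
      (D.δ.app Y ≫ c (D.obj Y) ≫ coprod.map (c Y) (D.ε.app Y) =
        c Y ≫ coprod.map coprod.inl (𝟙 Y)) ∧
      (D.δ.app Y ≫ c (D.obj Y) ≫ coprod.map (D.ε.app Y) (c Y) =
        c Y ≫ coprod.map (𝟙 Y) coprod.inr) := by
  intro Y
  set f0 : D.obj Y ⟶ D.obj Y ⨿ D.obj Y := D.δ.app Y ≫ c (D.obj Y) with hf0
  -- Fact A : f0 ≫ (ε ⨿ ε) = c Y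
  have hA : f0 ≫ coprod.map (D.ε.app Y) (D.ε.app Y) = c Y := by
    rw [hf0, Category.assoc, ← c_nat (D.ε.app Y), ← Category.assoc, D.right_counit,
      Category.id_comp]
    rfl
  have condP : pullback.fst f0 coprod.inl ≫ f0 = pullback.snd f0 coprod.inl ≫ coprod.inl :=
    pullback.condition
  have condQ : pullback.fst f0 coprod.inr ≫ f0 = pullback.snd f0 coprod.inr ≫ coprod.inr :=
    pullback.condition
  -- restrictions of coassociativity
  have coA := c_coassoc Y
  rw [← Category.assoc (D.δ.app Y), ← Category.assoc (D.δ.app Y), ← hf0] at coA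
  have coP := congrArg (pullback.fst f0 coprod.inl ≫ ·) coA
  have coQ := congrArg (pullback.fst f0 coprod.inr ≫ ·) coA
  simp only [← Category.assoc, condP, condQ] at coP coQ
  simp only [Category.assoc, coprod.inl_map, coprod.inr_map, coprod.associator_hom,
    coprod.inl_desc, coprod.inr_desc] at coP coQ
  have FP : pullback.snd f0 coprod.inl ≫ c Y =
      pullback.snd f0 coprod.inl ≫ D.ε.app Y ≫ coprod.inl := by
    have h2 := congrArg (· ≫ coprod.map (𝟙 Y) (coprod.desc (𝟙 Y) (𝟙 Y))) coP
    simpa [coprod.inl_desc] using h2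
  have FQ : pullback.snd f0 coprod.inr ≫ c Y =
      pullback.snd f0 coprod.inr ≫ D.ε.app Y ≫ coprod.inr := by
    rw [← cancel_mono (coprod.inr : Y ⨿ Y ⟶ Y ⨿ (Y ⨿ Y))]
    simpa using coQ.symm
  -- restrictions of fact A
  have rAP : pullback.fst f0 coprod.inl ≫ c Y =
      pullback.snd f0 coprod.inl ≫ D.ε.app Y ≫ coprod.inl := by
    rw [← hA, ← Category.assoc, condP]; simp
  have rAQ : pullback.fst f0 coprod.inr ≫ c Y =
      pullback.snd f0 coprod.inr ≫ D.ε.app Y ≫ coprod.inr := by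
    rw [← hA, ← Category.assoc, condQ]; simp
  -- four branch computations
  have b1P : pullback.fst f0 coprod.inl ≫ (f0 ≫ coprod.map (c Y) (D.ε.app Y)) =
      pullback.fst f0 coprod.inl ≫ (c Y ≫ coprod.map coprod.inl (𝟙 Y)) := by
    rw [← Category.assoc, condP, ← Category.assoc (pullback.fst f0 coprod.inl), rAP]
    simp [reassoc_of% FP]
  have b1Q : pullback.fst f0 coprod.inr ≫ (f0 ≫ coprod.map (c Y) (D.ε.app Y)) =
      pullback.fst f0 coprod.inr ≫ (c Y ≫ coprod.map coprod.inl (𝟙 Y)) := by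
    rw [← Category.assoc, condQ, ← Category.assoc (pullback.fst f0 coprod.inr), rAQ]
    simp
  have b2P : pullback.fst f0 coprod.inl ≫ (f0 ≫ coprod.map (D.ε.app Y) (c Y)) =
      pullback.fst f0 coprod.inl ≫ (c Y ≫ coprod.map (𝟙 Y) coprod.inr) := by
    rw [← Category.assoc, condP, ← Category.assoc (pullback.fst f0 coprod.inl), rAP]
    simp
  have b2Q : pullback.fst f0 coprod.inr ≫ (f0 ≫ coprod.map (D.ε.app Y) (c Y)) =
      pullback.fst f0 coprod.inr ≫ (c Y ≫ coprod.map (𝟙 Y) coprod.inr) := by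
    rw [← Category.assoc, condQ, ← Category.assoc (pullback.fst f0 coprod.inr), rAQ]
    simp [reassoc_of% FQ]
  have goal1 := aux_ext f0 b1P b1Q
  have goal2 := aux_ext f0 b2P b2Q
  constructor
  · simpa only [hf0, Category.assoc] using goal1
  · simpa only [hf0, Category.assoc] using goal2
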